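/- Let x_{t+1} minimize x ↦ f(x_t) + ⟨∇f(x_t), x−x_t⟩ + (1/2)⟨H_t(x−x_t), x−x_t⟩ + (η_t/6)‖x−x_t‖³ and set h_t = x_{t+1} − x_t, λ_t = (η_t/2)‖h_t‖. Then (H_t + λ_t I)h_t = −∇f(x_t) and H_t + λ_t I is positive semidefinite. -/

import Mathlib

set_option maxHeartbeats 1000000
open scoped RealInnerProductSpace

/-- Characterization of the cubic-regularized Newton step (Lemma 6 of the paper):
(H_t + λ_t I)h_t = −∇f(x_t) with λ_t = (η_t/2)‖h_t‖, and H_t + λ_t I ⪰ 0. -/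
theorem stmt_16 (n : ℕ) (f : EuclideanSpace ℝ (Fin n) → ℝ)
    (f' : EuclideanSpace ℝ (Fin n) → EuclideanSpace ℝ (Fin n))
    (hgrad : ∀ x, HasGradientAt f (f' x) x)
    (H : EuclideanSpace ℝ (Fin n) →L[ℝ] EuclideanSpace ℝ (Fin n))
    (hHsymm : ∀ u v, ⟪H u, v⟫ = ⟪u, H v⟫)
    (hHpsd : ∀ v, 0 ≤ ⟪H v, v⟫)
    (ηt : ℝ) (hη : 0 < ηt)
    (xt xnext : EuclideanSpace ℝ (Fin n))
    (hmin : ∀ x, f xt + ⟪f' xt, xnext - xt⟫ + 1 / 2 * ⟪H (xnext - xt), xnext - xt⟫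
        + ηt / 6 * ‖xnext - xt‖ ^ 3
      ≤ f xt + ⟪f' xt, x - xt⟫ + 1 / 2 * ⟪H (x - xt), x - xt⟫ + ηt / 6 * ‖x - xt‖ ^ 3) :
    H (xnext - xt) + (ηt / 2 * ‖xnext - xt‖) • (xnext - xt) = -f' xt ∧
    ∀ v, 0 ≤ ⟪H v + (ηt / 2 * ‖xnext - xt‖) • v, v⟫ := by
  have key : ∀ w, (⟪f' xt + H (xnext - xt) + (ηt / 2 * ‖xnext - xt‖) • (xnext - xt), w⟫ : ℝ)
      = 0 := by
    have hu : HasFDerivAt (fun x : EuclideanSpace ℝ (Fin n) => x - xt)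
        (ContinuousLinearMap.id ℝ _) xnext := (hasFDerivAt_id xnext).sub_const xt
    have d1 := (hasFDerivAt_const (f' xt) xnext).inner ℝ hu
    have d2 := ((H.hasFDerivAt).comp xnext hu).inner ℝ hu
    have dq := hu.inner ℝ hu
    have d3' := (Real.hasDerivAt_rpow_const (x := ⟪xnext - xt, xnext - xt⟫) (p := (3/2:ℝ))
        (Or.inr (by norm_num))).comp_hasFDerivAt xnext dq
    simp only [Function.comp_def] at d3' d2
    have hfun : (fun x : EuclideanSpace ℝ (Fin n) => (⟪x - xt, x - xt⟫ : ℝ) ^ ((3:ℝ)/2))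
        = fun x => ‖x - xt‖ ^ 3 := by
      funext x
      rw [real_inner_self_eq_norm_sq, ← Real.rpow_natCast ‖x - xt‖ 2,
        ← Real.rpow_mul (norm_nonneg _), ← Real.rpow_natCast ‖x - xt‖ 3]
      norm_num
    rw [hfun] at d3'
    have dφ := (((hasFDerivAt_const (f xt) xnext).add d1).add (d2.const_mul (1/2))).add
      (d3'.const_mul (ηt/6))
    have hloc : IsLocalMin (fun x => f xt + ⟪f' xt, x - xt⟫ + 1 / 2 * ⟪H (x - xt), x - xt⟫
        + ηt / 6 * ‖x - xt‖ ^ 3) xnext := Filter.Eventually.of_forall hmin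
    have hD0 := hloc.hasFDerivAt_eq_zero dφ
    intro w
    have hw := DFunLike.congr_fun hD0 w
    have hval : (⟪xnext - xt, xnext - xt⟫ : ℝ) ^ ((3:ℝ)/2 - 1) = ‖xnext - xt‖ := by
      rw [real_inner_self_eq_norm_sq, ← Real.rpow_natCast ‖xnext - xt‖ 2,
        ← Real.rpow_mul (norm_nonneg _)]
      norm_num
    simp only [ContinuousLinearMap.add_apply, ContinuousLinearMap.coe_comp',
      Function.comp_apply, ContinuousLinearMap.smul_apply, ContinuousLinearMap.prod_apply,
      ContinuousLinearMap.coe_id', id_eq, ContinuousLinearMap.zero_apply,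
      fderivInnerCLM_apply, smul_eq_mul, ContinuousLinearMap.coe_prod,
      hval, inner_zero_left, add_zero, zero_add] at hw
    rw [hHsymm w (xnext - xt), real_inner_comm (H (xnext - xt)) w,
      real_inner_comm (xnext - xt) w] at hw
    rw [inner_add_left, inner_add_left, real_inner_smul_left]
    linarith
  have e1 : f' xt + (H (xnext - xt) + (ηt / 2 * ‖xnext - xt‖) • (xnext - xt)) = 0 := by
    have h2 := key (f' xt + H (xnext - xt) + (ηt / 2 * ‖xnext - xt‖) • (xnext - xt))
    rw [inner_self_eq_zero] at h2
    rw [← add_assoc]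
    exact h2
  have part1 : H (xnext - xt) + (ηt / 2 * ‖xnext - xt‖) • (xnext - xt) = -f' xt := by
    rw [add_comm] at e1
    exact eq_neg_of_add_eq_zero_left e1
  refine ⟨part1, ?_⟩
  by_cases hh0 : xnext - xt = 0
  · intro v
    simp [hh0]
    exact hHpsd v
  · have base : ∀ u : EuclideanSpace ℝ (Fin n), (⟪xnext - xt, u⟫ : ℝ) ≠ 0 →
        0 ≤ (⟪H u + (ηt / 2 * ‖xnext - xt‖) • u, u⟫ : ℝ) := by
      intro u hcu
      have hu0 : u ≠ 0 := by rintro rfl; simp at hcu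
      have hun : (0:ℝ) < ‖u‖ ^ 2 := pow_pos (norm_pos_iff.mpr hu0) 2
      set c : ℝ := ⟪xnext - xt, u⟫ with hc
      set t : ℝ := -2 * c / ‖u‖ ^ 2 with ht
      have ht0 : t ≠ 0 := by
        rw [ht]
        exact div_ne_zero (by simpa using hcu) (ne_of_gt hun)
      have htc : 2 * (t * c) + t ^ 2 * ‖u‖ ^ 2 = 0 := by
        rw [ht]; field_simp; ring
      have hysq : ‖xnext - xt + t • u‖ ^ 2 = ‖xnext - xt‖ ^ 2 := by
        rw [norm_add_sq_real, real_inner_smul_right, norm_smul, mul_pow]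
        simp only [Real.norm_eq_abs, sq_abs]
        rw [← hc]
        linarith
      have hynorm : ‖xnext - xt + t • u‖ = ‖xnext - xt‖ := by
        nlinarith [norm_nonneg (xnext - xt + t • u), norm_nonneg (xnext - xt), hysq]
      have hm := hmin (xt + (xnext - xt + t • u))
      rw [add_sub_cancel_left, hynorm] at hm
      -- scalar expansions
      have eg : (⟪f' xt, xnext - xt + t • u⟫ : ℝ) = ⟪f' xt, xnext - xt⟫ + t * ⟪f' xt, u⟫ := by
        rw [inner_add_right, real_inner_smul_right]
      have eH : (⟪H (xnext - xt + t • u), xnext - xt + t • u⟫ : ℝ)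
          = ⟪H (xnext - xt), xnext - xt⟫ + 2 * (t * ⟪H (xnext - xt), u⟫)
            + t ^ 2 * ⟪H u, u⟫ := by
        simp only [map_add, map_smul, inner_add_left, inner_add_right,
          real_inner_smul_left, real_inner_smul_right]
        rw [hHsymm u (xnext - xt), real_inner_comm (H (xnext - xt)) u]
        ring
      rw [eg, eH] at hm
      -- first-order condition applied to u
      have hk := key u
      rw [inner_add_left, inner_add_left, real_inner_smul_left, ← hc] at hk
      -- goal expansion
      rw [inner_add_left, real_inner_smul_left, real_inner_self_eq_norm_sq]
      -- combine: hm gives 0 ≤ t*⟪f' xt,u⟫ + t*⟪Hh,u⟫ + t²/2 ⟪Hu,u⟫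
      have h1 : 0 ≤ t * ⟪f' xt, u⟫ + t * ⟪H (xnext - xt), u⟫ + t ^ 2 / 2 * ⟪H u, u⟫ := by
        linarith
      have h2 : t * ⟪f' xt, u⟫ + t * ⟪H (xnext - xt), u⟫
          = - (ηt / 2 * ‖xnext - xt‖) * (t * c) := by
        have : (⟪f' xt, u⟫ : ℝ) + ⟪H (xnext - xt), u⟫ = - (ηt / 2 * ‖xnext - xt‖ * c) := by
          linarith [hk]
        calc t * ⟪f' xt, u⟫ + t * ⟪H (xnext - xt), u⟫
            = t * ((⟪f' xt, u⟫ : ℝ) + ⟪H (xnext - xt), u⟫) := by ring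
          _ = - (ηt / 2 * ‖xnext - xt‖) * (t * c) := by rw [this]; ring
      have h3 : t * c = - (t ^ 2 * ‖u‖ ^ 2) / 2 := by linarith
      have h4 : 0 ≤ t ^ 2 / 2 * (ηt / 2 * ‖xnext - xt‖ * ‖u‖ ^ 2 + ⟪H u, u⟫) := by
        rw [h2, h3] at h1
        nlinarith [h1]
      have ht2 : 0 < t ^ 2 / 2 := by positivity
      nlinarith [h4, ht2]
    intro v
    by_cases hcv : (⟪xnext - xt, v⟫ : ℝ) ≠ 0
    · exact base v hcv
    · push_neg at hcv
      -- limit argument: v + ε • (xnext - xt)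
      have hcont : Continuous fun ε : ℝ =>
          (⟪H (v + ε • (xnext - xt)) + (ηt / 2 * ‖xnext - xt‖) • (v + ε • (xnext - xt)),
            v + ε • (xnext - xt)⟫ : ℝ) := by
        have hc1 : Continuous fun ε : ℝ => v + ε • (xnext - xt) := by continuity
        exact ((H.continuous.comp hc1).add (hc1.const_smul (ηt / 2 * ‖xnext - xt‖))).inner hc1
      have hev : ∀ ε : ℝ, ε ≠ 0 →
          0 ≤ (⟪H (v + ε • (xnext - xt)) + (ηt / 2 * ‖xnext - xt‖) • (v + ε • (xnext - xt)),
            v + ε • (xnext - xt)⟫ : ℝ) := by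
        intro ε hε
        refine base _ ?_
        rw [inner_add_right, real_inner_smul_right, hcv, real_inner_self_eq_norm_sq]
        have : ‖xnext - xt‖ ^ 2 ≠ 0 := pow_ne_zero 2 (norm_ne_zero_iff.mpr hh0)
        simpa using mul_ne_zero hε this
      have htend : Filter.Tendsto (fun ε : ℝ =>
          (⟪H (v + ε • (xnext - xt)) + (ηt / 2 * ‖xnext - xt‖) • (v + ε • (xnext - xt)),
            v + ε • (xnext - xt)⟫ : ℝ)) (nhdsWithin 0 {(0:ℝ)}ᶜ)
          (nhds (⟪H (v + (0:ℝ) • (xnext - xt)) + (ηt / 2 * ‖xnext - xt‖) •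
            (v + (0:ℝ) • (xnext - xt)), v + (0:ℝ) • (xnext - xt)⟫ : ℝ)) :=
        (hcont.tendsto 0).mono_left nhdsWithin_le_nhds
      have hle := ge_of_tendsto htend (by
        filter_upwards [self_mem_nhdsWithin] with ε hε
        exact hev ε hε)
      simpa using hle
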